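/- Let f : C → ℝ be convex and differentiable on an open set containing a convex set C in a real inner product space. A point x* ∈ C is a global minimizer of f over C if and only if ⟨∇f(x*), x - x*⟩ ≥ 0 for all x ∈ C. Specialized to f(Q,R) = λ₁(R^{-1/2} Q Q^H R^{-1/2}) on ℬ₀ × ℬ₁ (with ℬ₀ ⊂ ℂ^{N×M}\{0}, ℬ₁ ⊂ Hermitian PD matrices, both convex and closed, and f differentiable at (Q*,R*) with simple largest eigenvalue), (Q*,R*) is optimal if and only if 2 Re(w*^H Q Q*^H w*) - w*^H (λ*(R - R*) + 2 Q* Q*^H) w* ≥ 0 for all Q ∈ ℬ₀, R ∈ ℬ₁, where λ* = λ₁(R*^{-1/2} Q* Q*^H R*^{-1/2}), u₁* a unit principal eigenvector, and w* = R*^{-1/2} u₁*. -/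

import Mathlib

open Matrix Complex
open scoped ComplexOrder

/-- The largest real eigenvalue of a complex matrix (as `sSup` of its set of real
eigenvalues); for a Hermitian matrix this is the largest eigenvalue. -/
noncomputable def lambdaMax {N : ℕ} (A : Matrix (Fin N) (Fin N) ℂ) : ℝ :=
  sSup {t : ℝ | ∃ v : Fin N → ℂ, v ≠ 0 ∧ A.mulVec v = (t : ℂ) • v}

open Classical in
/-- The inverse of the positive definite square root of a positive definite matrix
(junk value `0` if the matrix is not positive definite). -/
noncomputable def isqrt {N : ℕ} (R : Matrix (Fin N) (Fin N) ℂ) : Matrix (Fin N) (Fin N) ℂ :=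
  if h : R.PosDef then ((h.1.eigenvectorUnitary : Matrix (Fin N) (Fin N) ℂ) *
    diagonal ((↑) ∘ (fun x : ℝ => Real.sqrt x) ∘ h.1.eigenvalues) *
    (star h.1.eigenvectorUnitary : Matrix (Fin N) (Fin N) ℂ))⁻¹ else 0

/-- Euclidean norm of a complex vector. -/
noncomputable def vecNorm {N : ℕ} (v : Fin N → ℂ) : ℝ :=
  Real.sqrt (∑ i, Complex.normSq (v i))

/-- Frobenius norm of a complex matrix. -/
noncomputable def frobNorm {N M : ℕ} (X : Matrix (Fin N) (Fin M) ℂ) : ℝ :=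
  Real.sqrt (∑ i, ∑ j, Complex.normSq (X i j))

namespace OptAux
variable {N : ℕ}

/-- complex quadratic form -/
noncomputable def qc (A : Matrix (Fin N) (Fin N) ℂ) (v : Fin N → ℂ) : ℂ :=
  star v ⬝ᵥ A.mulVec v

/-- squared euclidean norm -/
noncomputable def sn (v : Fin N → ℂ) : ℝ := ∑ i, Complex.normSq (v i)

lemma dot_star_self (v : Fin N → ℂ) : star v ⬝ᵥ v = ((sn v : ℝ) : ℂ) := by
  simp only [dotProduct, sn, Pi.star_apply]
  push_cast
  congr 1; funext i
  rw [Complex.normSq_eq_conj_mul_self]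
  rfl

lemma sn_nonneg (v : Fin N → ℂ) : 0 ≤ sn v :=
  Finset.sum_nonneg fun i _ => Complex.normSq_nonneg _

lemma sn_pos {v : Fin N → ℂ} (hv : v ≠ 0) : 0 < sn v := by
  rcases (sn_nonneg v).lt_or_eq with h | h
  · exact h
  · exfalso; apply hv
    have := (Finset.sum_eq_zero_iff_of_nonneg (fun i _ => Complex.normSq_nonneg (v i))).1 h.symm
    funext i
    exact Complex.normSq_eq_zero.1 (this i (Finset.mem_univ i))

lemma sn_eq_zero {v : Fin N → ℂ} (hv : sn v = 0) : v = 0 := by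
  by_contra h; exact absurd hv (sn_pos h).ne'

section spectral
variable [Nonempty (Fin N)] {A : Matrix (Fin N) (Fin N) ℂ}

/-- largest eigenvalue of a Hermitian matrix -/
noncomputable def maxEig (hA : A.IsHermitian) : ℝ :=
  Finset.univ.sup' Finset.univ_nonempty hA.eigenvalues

lemma qc_eq_sum (hA : A.IsHermitian) (v : Fin N → ℂ) :
    qc A v = ((∑ i, hA.eigenvalues i *
      Complex.normSq (((star (hA.eigenvectorUnitary : Matrix (Fin N) (Fin N) ℂ)).mulVec v) i) : ℝ) : ℂ) := by
  set U : Matrix (Fin N) (Fin N) ℂ := (hA.eigenvectorUnitary : Matrix (Fin N) (Fin N) ℂ) with hU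
  set c : Fin N → ℂ := (star U).mulVec v with hc
  have hsc : star v ᵥ* U = star c := by
    rw [hc, star_mulVec, star_eq_conjTranspose, conjTranspose_conjTranspose]
  calc qc A v = star v ⬝ᵥ (U * diagonal (RCLike.ofReal ∘ hA.eigenvalues) * star U).mulVec v := by
        rw [qc]
        conv_lhs => rw [hA.spectral_theorem, Unitary.conjStarAlgAut_apply]
    _ = (star v ᵥ* U) ⬝ᵥ (diagonal (RCLike.ofReal ∘ hA.eigenvalues)).mulVec c := by
        rw [mul_assoc, ← mulVec_mulVec, dotProduct_mulVec, ← mulVec_mulVec]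
    _ = ∑ i, ((hA.eigenvalues i : ℂ)) * (Complex.normSq (c i) : ℂ) := by
        rw [hsc, dotProduct]
        congr 1; funext i
        simp [mulVec_diagonal, Complex.normSq_eq_conj_mul_self]
        ring
    _ = _ := by push_cast; rfl

lemma sn_star_unitary (hA : A.IsHermitian) (v : Fin N → ℂ) :
    sn ((star (hA.eigenvectorUnitary : Matrix (Fin N) (Fin N) ℂ)).mulVec v) = sn v := by
  set U : Matrix (Fin N) (Fin N) ℂ := (hA.eigenvectorUnitary : Matrix (Fin N) (Fin N) ℂ) with hU
  set c : Fin N → ℂ := (star U).mulVec v with hc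
  have hsc : star v ᵥ* U = star c := by
    rw [hc, star_mulVec, star_eq_conjTranspose, conjTranspose_conjTranspose]
  have : star c ⬝ᵥ c = star v ⬝ᵥ v := by
    have hUU : U * star U = 1 := (Matrix.mem_unitaryGroup_iff).mp hA.eigenvectorUnitary.2
    rw [← hsc, hc, ← dotProduct_mulVec, mulVec_mulVec, hUU, one_mulVec]
  have := this
  rw [dot_star_self, dot_star_self] at this
  exact_mod_cast this

lemma rayleigh_le (hA : A.IsHermitian) (v : Fin N → ℂ) :
    (qc A v).re ≤ maxEig hA * sn v := by
  set c := (star (hA.eigenvectorUnitary : Matrix (Fin N) (Fin N) ℂ)).mulVec v with hc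
  rw [qc_eq_sum hA v, Complex.ofReal_re]
  calc ∑ i, hA.eigenvalues i * Complex.normSq (c i)
      ≤ ∑ i, maxEig hA * Complex.normSq (c i) := by
        apply Finset.sum_le_sum
        intro i _
        exact mul_le_mul_of_nonneg_right
          (Finset.le_sup' hA.eigenvalues (Finset.mem_univ i)) (Complex.normSq_nonneg _)
    _ = maxEig hA * sn c := by rw [← Finset.mul_sum]; rfl
    _ = maxEig hA * sn v := by rw [sn_star_unitary]

lemma eigen_of_eq (hA : A.IsHermitian) {v : Fin N → ℂ}
    (h : (qc A v).re = maxEig hA * sn v) : A.mulVec v = ((maxEig hA : ℝ) : ℂ) • v := by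
  classical
  set U : Matrix (Fin N) (Fin N) ℂ := (hA.eigenvectorUnitary : Matrix (Fin N) (Fin N) ℂ) with hU
  set c := (star U).mulVec v with hc
  have hUU : U * star U = 1 := (Matrix.mem_unitaryGroup_iff).mp hA.eigenvectorUnitary.2
  have hsum : ∑ i, (maxEig hA - hA.eigenvalues i) * Complex.normSq (c i) = 0 := by
    have h1 : ∑ i, hA.eigenvalues i * Complex.normSq (c i) = maxEig hA * sn v := by
      have := qc_eq_sum hA v
      rw [this, Complex.ofReal_re] at h
      exact h
    have h2 : sn c = sn v := sn_star_unitary hA v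
    simp only [sub_mul, Finset.sum_sub_distrib, h1, ← Finset.mul_sum]
    rw [show ∑ i, Complex.normSq (c i) = sn c from rfl, h2]
    ring
  have hterm : ∀ i ∈ Finset.univ, (maxEig hA - hA.eigenvalues i) * Complex.normSq (c i) = 0 := by
    rw [← Finset.sum_eq_zero_iff_of_nonneg]
    · exact hsum
    · intro i _
      apply mul_nonneg _ (Complex.normSq_nonneg _)
      rw [sub_nonneg]
      exact Finset.le_sup' hA.eigenvalues (Finset.mem_univ i)
  have hDc : (diagonal (RCLike.ofReal ∘ hA.eigenvalues)).mulVec c = ((maxEig hA : ℝ) : ℂ) • c := by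
    funext i
    simp only [mulVec_diagonal, Function.comp_apply, Pi.smul_apply, smul_eq_mul]
    rcases mul_eq_zero.1 (hterm i (Finset.mem_univ i)) with h' | h'
    · rw [sub_eq_zero] at h'
      rw [← h']
      norm_num
    · rw [Complex.normSq_eq_zero.1 h']
      ring
  calc A.mulVec v = (U * diagonal (RCLike.ofReal ∘ hA.eigenvalues) * star U).mulVec v := by
        conv_lhs => rw [hA.spectral_theorem, Unitary.conjStarAlgAut_apply]
    _ = U.mulVec ((diagonal (RCLike.ofReal ∘ hA.eigenvalues)).mulVec c) := by
        rw [mul_assoc, ← mulVec_mulVec, ← mulVec_mulVec]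
    _ = ((maxEig hA : ℝ) : ℂ) • (U.mulVec c) := by rw [hDc, mulVec_smul]
    _ = ((maxEig hA : ℝ) : ℂ) • v := by
        rw [hc, mulVec_mulVec, hUU, one_mulVec]

lemma exists_eigvec (hA : A.IsHermitian) :
    ∃ v : Fin N → ℂ, sn v = 1 ∧ A.mulVec v = ((maxEig hA : ℝ) : ℂ) • v := by
  obtain ⟨j, _, hj⟩ := Finset.exists_mem_eq_sup' Finset.univ_nonempty hA.eigenvalues
  refine ⟨⇑(hA.eigenvectorBasis j), ?_, ?_⟩
  · have hn : ‖hA.eigenvectorBasis j‖ = 1 := hA.eigenvectorBasis.orthonormal.1 j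
    have := EuclideanSpace.norm_eq (hA.eigenvectorBasis j)
    rw [hn] at this
    have h2 : (∑ i, ‖hA.eigenvectorBasis j i‖ ^ 2) = 1 := by
      have := congrArg (· ^ 2) this.symm
      simpa [Real.sq_sqrt (Finset.sum_nonneg fun i _ => sq_nonneg _)] using this
    rw [sn]
    rw [← h2]
    congr 1; funext i
    rw [Complex.normSq_eq_norm_sq]
  · have := hA.mulVec_eigenvectorBasis j
    rw [this, ← hj]
    funext i
    simp [maxEig, Complex.real_smul]

lemma lambdaMax_eq (hA : A.IsHermitian) : lambdaMax A = maxEig hA := by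
  have hmem : maxEig hA ∈ {t : ℝ | ∃ v : Fin N → ℂ, v ≠ 0 ∧ A.mulVec v = (t : ℂ) • v} := by
    obtain ⟨v, hv1, hv2⟩ := exists_eigvec hA
    exact ⟨v, fun h => by simp [h, sn] at hv1, hv2⟩
  have hub : ∀ t ∈ {t : ℝ | ∃ v : Fin N → ℂ, v ≠ 0 ∧ A.mulVec v = (t : ℂ) • v}, t ≤ maxEig hA := by
    rintro t ⟨v, hv, hAv⟩
    have h1 : (qc A v) = (t : ℂ) * ((sn v : ℝ) : ℂ) := by
      rw [qc, hAv, dotProduct_smul, smul_eq_mul, dot_star_self]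
    have h2 : (qc A v).re = t * sn v := by rw [h1]; push_cast; simp
    have := rayleigh_le hA v
    rw [h2] at this
    exact le_of_mul_le_mul_right (by linarith [this]) (sn_pos hv)
  apply le_antisymm
  · exact csSup_le ⟨_, hmem⟩ hub
  · exact le_csSup ⟨maxEig hA, hub⟩ hmem

end spectral

section pd
variable {R : Matrix (Fin N) (Fin N) ℂ} (hR : R.PosDef)

/-- the positive square root -/
noncomputable def psqrt : Matrix (Fin N) (Fin N) ℂ :=
  (hR.1.eigenvectorUnitary : Matrix (Fin N) (Fin N) ℂ) *
    diagonal ((↑) ∘ (fun x : ℝ => Real.sqrt x) ∘ hR.1.eigenvalues) *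
    (star hR.1.eigenvectorUnitary : Matrix (Fin N) (Fin N) ℂ)

lemma psqrt_mul_self : psqrt hR * psqrt hR = R := by
  have hU : (star hR.1.eigenvectorUnitary : Matrix (Fin N) (Fin N) ℂ) *
      (hR.1.eigenvectorUnitary : Matrix (Fin N) (Fin N) ℂ) = 1 :=
    Unitary.coe_star_mul_self _
  have hD : diagonal (((↑) ∘ (fun x : ℝ => Real.sqrt x) ∘ hR.1.eigenvalues) : Fin N → ℂ) *
      diagonal ((↑) ∘ (fun x : ℝ => Real.sqrt x) ∘ hR.1.eigenvalues) =
      diagonal (RCLike.ofReal ∘ hR.1.eigenvalues) := by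
    rw [diagonal_mul_diagonal]
    congr 1; funext i
    simp only [Function.comp_apply]
    rw [← Complex.ofReal_mul, Real.mul_self_sqrt (hR.eigenvalues_pos i).le]
    rfl
  conv_rhs => rw [hR.1.spectral_theorem, Unitary.conjStarAlgAut_apply]
  rw [psqrt]
  calc _ = (hR.1.eigenvectorUnitary : Matrix (Fin N) (Fin N) ℂ) *
        (diagonal ((↑) ∘ (fun x : ℝ => Real.sqrt x) ∘ hR.1.eigenvalues) *
        ((star hR.1.eigenvectorUnitary : Matrix (Fin N) (Fin N) ℂ) *
        (hR.1.eigenvectorUnitary : Matrix (Fin N) (Fin N) ℂ)) *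
        diagonal ((↑) ∘ (fun x : ℝ => Real.sqrt x) ∘ hR.1.eigenvalues)) *
        (star hR.1.eigenvectorUnitary : Matrix (Fin N) (Fin N) ℂ) := by
          simp only [Matrix.mul_assoc]
    _ = _ := by rw [hU, Matrix.mul_one, hD]

lemma psqrt_herm : (psqrt hR).IsHermitian := by
  rw [psqrt, star_eq_conjTranspose]
  apply isHermitian_mul_mul_conjTranspose
  rw [isHermitian_diagonal_iff]
  intro i
  simp [IsSelfAdjoint]

lemma isqrt_eq : isqrt R = (psqrt hR)⁻¹ := dif_pos hR

lemma sqrt_det_isUnit : IsUnit (psqrt hR).det := by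
  have h : (psqrt hR).det * (psqrt hR).det = R.det := by
    rw [← det_mul, psqrt_mul_self hR]
  have : R.det ≠ 0 := by
    have := hR.det_pos
    intro h0
    rw [h0] at this
    norm_num at this
  apply isUnit_iff_ne_zero.2
  intro h0
  rw [h0, zero_mul] at h
  exact this h.symm

lemma sqrt_mul_isqrt : psqrt hR * isqrt R = 1 := by
  rw [isqrt_eq hR]; exact mul_nonsing_inv _ (sqrt_det_isUnit hR)

lemma isqrt_mul_sqrt : isqrt R * psqrt hR = 1 := by
  rw [isqrt_eq hR]; exact nonsing_inv_mul _ (sqrt_det_isUnit hR)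

include hR in
lemma isqrt_herm : (isqrt R).IsHermitian := by
  rw [isqrt_eq hR, IsHermitian, conjTranspose_nonsing_inv, (psqrt_herm hR).eq]

include hR in
lemma isqrt_mul_self_mul : isqrt R * R * isqrt R = 1 := by
  calc isqrt R * R * isqrt R
      = isqrt R * (psqrt hR * psqrt hR) * isqrt R := by
        rw [psqrt_mul_self hR]
    _ = (isqrt R * psqrt hR) * (psqrt hR * isqrt R) := by
        noncomm_ring
    _ = 1 := by rw [sqrt_mul_isqrt hR, isqrt_mul_sqrt hR, one_mul]

lemma sqrt_isqrt_vec (v : Fin N → ℂ) :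
    (psqrt hR).mulVec ((isqrt R).mulVec v) = v := by
  rw [mulVec_mulVec, sqrt_mul_isqrt hR, one_mulVec]

lemma isqrt_sqrt_vec (v : Fin N → ℂ) :
    (isqrt R).mulVec ((psqrt hR).mulVec v) = v := by
  rw [mulVec_mulVec, isqrt_mul_sqrt hR, one_mulVec]

end pd

lemma qc_conj {S : Matrix (Fin N) (Fin N) ℂ} (hS : S.IsHermitian)
    (M : Matrix (Fin N) (Fin N) ℂ) (u : Fin N → ℂ) :
    qc (S * M * S) u = qc M (S.mulVec u) := by
  rw [qc, qc, mul_assoc, ← mulVec_mulVec, dotProduct_mulVec, ← mulVec_mulVec]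
  congr 1
  rw [star_mulVec, hS.eq]

lemma conj_herm {S M : Matrix (Fin N) (Fin N) ℂ} (hS : S.IsHermitian) (hM : M.IsHermitian) :
    (S * M * S).IsHermitian := by
  rw [IsHermitian, conjTranspose_mul, conjTranspose_mul, hS.eq, hM.eq, mul_assoc]

lemma qc_R_isqrt_vec {R : Matrix (Fin N) (Fin N) ℂ} (hR : R.PosDef) (u : Fin N → ℂ) :
    qc R ((isqrt R).mulVec u) = ((sn u : ℝ) : ℂ) := by
  rw [← qc_conj (isqrt_herm hR), isqrt_mul_self_mul hR, qc, one_mulVec, dot_star_self]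

section transfer
variable [Nonempty (Fin N)]

lemma rayleigh_w_le {R : Matrix (Fin N) (Fin N) ℂ} (hR : R.PosDef)
    {M' : Matrix (Fin N) (Fin N) ℂ} (hM : M'.IsHermitian) (w : Fin N → ℂ) :
    (qc M' w).re ≤ lambdaMax (isqrt R * M' * isqrt R) * (qc R w).re := by
  have hA : (isqrt R * M' * isqrt R).IsHermitian := conj_herm (isqrt_herm hR) hM
  set u := (psqrt hR).mulVec w with hu
  have hw : (isqrt R).mulVec u = w := isqrt_sqrt_vec hR w
  have h1 : qc M' w = qc (isqrt R * M' * isqrt R) u := by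
    rw [qc_conj (isqrt_herm hR), hw]
  have h2 : (qc R w).re = sn u := by
    have : qc R w = ((sn u : ℝ) : ℂ) := by rw [← hw, qc_R_isqrt_vec hR]
    rw [this, Complex.ofReal_re]
  rw [h1, h2, lambdaMax_eq hA]
  exact rayleigh_le hA u

lemma rayleigh_w_max {R : Matrix (Fin N) (Fin N) ℂ} (hR : R.PosDef)
    {M' : Matrix (Fin N) (Fin N) ℂ} (hM : M'.IsHermitian) :
    ∃ w : Fin N → ℂ, w ≠ 0 ∧ (qc R w).re = 1 ∧
      (qc M' w).re = lambdaMax (isqrt R * M' * isqrt R) := by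
  have hA : (isqrt R * M' * isqrt R).IsHermitian := conj_herm (isqrt_herm hR) hM
  obtain ⟨v, hv1, hv2⟩ := exists_eigvec hA
  have hvne : v ≠ 0 := fun h => by simp [h, sn] at hv1
  refine ⟨(isqrt R).mulVec v, ?_, ?_, ?_⟩
  · intro h
    apply hvne
    have := congrArg ((psqrt hR).mulVec) h
    rw [sqrt_isqrt_vec hR] at this
    simpa using this
  · rw [qc_R_isqrt_vec hR, hv1]
    norm_num
  · rw [← qc_conj (isqrt_herm hR), lambdaMax_eq hA]
    rw [qc, hv2, dotProduct_smul, smul_eq_mul, dot_star_self, hv1]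
    push_cast
    simp

end transfer

lemma dot_QQt {M : ℕ} (Q Q' : Matrix (Fin N) (Fin M) ℂ) (w : Fin N → ℂ) :
    star w ⬝ᵥ (Q * Q'ᴴ).mulVec w = star (Qᴴ.mulVec w) ⬝ᵥ (Q'ᴴ.mulVec w) := by
  rw [← mulVec_mulVec, dotProduct_mulVec]
  congr 1
  rw [star_mulVec, conjTranspose_conjTranspose]

lemma re_dot_comm (u v : Fin N → ℂ) : (star u ⬝ᵥ v).re = (star v ⬝ᵥ u).re := by
  have h : star v ⬝ᵥ u = star (star u ⬝ᵥ v) := by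
    simp [dotProduct, mul_comm]
  rw [h]
  exact Complex.conj_re _

lemma qc_csmul_re (M' : Matrix (Fin N) (Fin N) ℂ) (c : ℂ) (w : Fin N → ℂ) :
    (qc M' (c • w)).re = Complex.normSq c * (qc M' w).re := by
  have h : qc M' (c • w) = (star c * c) * qc M' w := by
    rw [qc, qc, star_smul, smul_dotProduct, mulVec_smul, dotProduct_smul]
    simp [smul_eq_mul]
    ring
  rw [h]
  rw [show star c * c = ((Complex.normSq c : ℝ) : ℂ) by
    rw [Complex.normSq_eq_conj_mul_self]; rfl]
  simp [Complex.mul_re]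

lemma qc_add_re (M₁ M₂ : Matrix (Fin N) (Fin N) ℂ) (w : Fin N → ℂ) :
    (qc (M₁ + M₂) w).re = (qc M₁ w).re + (qc M₂ w).re := by
  rw [qc, add_mulVec, dotProduct_add]
  rfl

lemma qc_sub_re (M₁ M₂ : Matrix (Fin N) (Fin N) ℂ) (w : Fin N → ℂ) :
    (qc (M₁ - M₂) w).re = (qc M₁ w).re - (qc M₂ w).re := by
  rw [qc, sub_mulVec, dotProduct_sub]
  rfl

lemma qc_rsmul_re (r : ℝ) (M' : Matrix (Fin N) (Fin N) ℂ) (w : Fin N → ℂ) :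
    (qc (r • M') w).re = r * (qc M' w).re := by
  have h : qc (r • M') w = (r : ℂ) * qc M' w := by
    rw [qc, qc]
    rw [show (r • M') = ((r : ℂ)) • M' by
      funext i j; simp [Pi.smul_apply, Complex.real_smul]]
    rw [smul_mulVec, dotProduct_smul, smul_eq_mul]
  rw [h]
  simp [Complex.mul_re]

lemma cont_qc_re (M' : Matrix (Fin N) (Fin N) ℂ) :
    Continuous fun w : Fin N → ℂ => (qc M' w).re := by
  have h : Continuous fun w : Fin N → ℂ => ∑ i, star (w i) * ∑ j, M' i j * w j := by
    apply continuous_finset_sum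
    intro i _
    exact ((continuous_star.comp (continuous_apply i)).mul
      (continuous_finset_sum _ fun j _ => continuous_const.mul (continuous_apply j)))
  exact Complex.continuous_re.comp h

lemma QQt_expand {M : ℕ} (Q₀ Δ : Matrix (Fin N) (Fin M) ℂ) (t : ℝ) :
    (Q₀ + t • Δ) * (Q₀ + t • Δ)ᴴ =
      Q₀ * Q₀ᴴ + t • (Δ * Q₀ᴴ + Q₀ * Δᴴ) + (t ^ 2) • (Δ * Δᴴ) := by
  have h : (t • Δ)ᴴ = t • Δᴴ := by
    rw [conjTranspose_smul]
    norm_num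
  rw [conjTranspose_add, h]
  simp only [Matrix.mul_add, Matrix.add_mul, Matrix.smul_mul, Matrix.mul_smul, smul_smul,
    smul_add, pow_two]
  module

lemma sn_sub_smul {M : ℕ} (a b : Fin M → ℂ) (r : ℝ) :
    sn (a - (r : ℂ) • b) = sn a - 2 * r * (star a ⬝ᵥ b).re + r ^ 2 * sn b := by
  have hterm : ∀ i, Complex.normSq (a i - (r : ℂ) * b i)
      = Complex.normSq (a i) - 2 * r * ((starRingEnd ℂ) (a i) * b i).re
        + r ^ 2 * Complex.normSq (b i) := by
    intro i
    simp only [Complex.normSq_apply, Complex.sub_re, Complex.sub_im, Complex.mul_re,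
      Complex.mul_im, Complex.ofReal_re, Complex.ofReal_im, Complex.conj_re, Complex.conj_im]
    ring
  have hdot : (star a ⬝ᵥ b).re = ∑ i, ((starRingEnd ℂ) (a i) * b i).re := by
    rw [dotProduct, Complex.re_sum]
    rfl
  rw [sn, sn, sn, hdot]
  rw [Finset.sum_congr rfl fun i _ => by
    rw [show (a - (r : ℂ) • b) i = a i - (r : ℂ) * b i from rfl, hterm i]]
  rw [Finset.sum_add_distrib, Finset.sum_sub_distrib, ← Finset.mul_sum, ← Finset.mul_sum]

end OptAux

set_option maxHeartbeats 1000000 in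
/-- first-order optimality condition for minimizing the convex function
`f(Q,R) = λ₁(R^{-1/2} Q Qᴴ R^{-1/2})` over convex closed sets `ℬ₀ × ℬ₁`: with
`λ* = f(Q*,R*)`, `u₁*` a unit principal eigenvector (assumed simple) and
`w* = R*^{-1/2} u₁*`, the point `(Q*,R*)` is a global minimizer iff
`2 Re(w*ᴴ Q Q*ᴴ w*) - w*ᴴ (λ*(R - R*) + 2 Q* Q*ᴴ) w* ≥ 0` for all `Q ∈ ℬ₀, R ∈ ℬ₁`
(the variational inequality `⟨∇f(x*), x - x*⟩ ≥ 0`). -/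
theorem optimality_condition {N M : ℕ}
    (B₀ : Set (Matrix (Fin N) (Fin M) ℂ)) (B₁ : Set (Matrix (Fin N) (Fin N) ℂ))
    (hB₀conv : Convex ℝ B₀) (hB₀cl : IsClosed B₀)
    (hB₀0 : (0 : Matrix (Fin N) (Fin M) ℂ) ∉ B₀)
    (hB₁conv : Convex ℝ B₁) (hB₁cl : IsClosed B₁)
    (hB₁pd : ∀ R ∈ B₁, R.PosDef)
    (Qs : Matrix (Fin N) (Fin M) ℂ) (Rs : Matrix (Fin N) (Fin N) ℂ)
    (hQs : Qs ∈ B₀) (hRs : Rs ∈ B₁)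
    (ls : ℝ) (hls : ls = lambdaMax (isqrt Rs * (Qs * Qsᴴ) * isqrt Rs))
    (u₁ : Fin N → ℂ)
    (hu₁ : (isqrt Rs * (Qs * Qsᴴ) * isqrt Rs).mulVec u₁ = (ls : ℂ) • u₁)
    (hu₁n : vecNorm u₁ = 1)
    (hsimple : ∀ v : Fin N → ℂ,
      (isqrt Rs * (Qs * Qsᴴ) * isqrt Rs).mulVec v = (ls : ℂ) • v → ∃ c : ℂ, v = c • u₁)
    (ws : Fin N → ℂ) (hws : ws = (isqrt Rs).mulVec u₁) :
    (∀ Q ∈ B₀, ∀ R ∈ B₁, ls ≤ lambdaMax (isqrt R * (Q * Qᴴ) * isqrt R)) ↔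
    (∀ Q ∈ B₀, ∀ R ∈ B₁,
      0 ≤ 2 * (star ws ⬝ᵥ (Q * Qsᴴ).mulVec ws).re
          - (star ws ⬝ᵥ (ls • (R - Rs) + (2 : ℝ) • (Qs * Qsᴴ)).mulVec ws).re) := by
  classical
  open OptAux in
  have hNE : Nonempty (Fin N) := by
    rcases Nat.eq_zero_or_pos N with h0 | h0
    · exfalso
      subst h0
      simp [vecNorm] at hu₁n
    · exact ⟨⟨0, h0⟩⟩
  have hRsPD : Rs.PosDef := hB₁pd Rs hRs
  have hsnu : OptAux.sn u₁ = 1 := Real.sqrt_eq_one.mp hu₁n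
  have hu₁ne : u₁ ≠ 0 := fun h => by simp [h, OptAux.sn] at hsnu
  have hwsne : ws ≠ 0 := by
    intro h
    apply hu₁ne
    have := congrArg ((psqrt hRsPD).mulVec) h
    rw [hws, OptAux.sqrt_isqrt_vec hRsPD] at this
    simpa using this
  have hqRs : (OptAux.qc Rs ws).re = 1 := by
    rw [hws, OptAux.qc_R_isqrt_vec hRsPD, hsnu]
    norm_num
  have hqQs : (OptAux.qc (Qs * Qsᴴ) ws).re = ls := by
    rw [hws, ← OptAux.qc_conj (OptAux.isqrt_herm hRsPD)]
    rw [OptAux.qc, hu₁, dotProduct_smul, smul_eq_mul, OptAux.dot_star_self, hsnu]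
    push_cast
    simp
  -- rewrite of the variational expression
  have hD : ∀ (Q : Matrix (Fin N) (Fin M) ℂ) (R : Matrix (Fin N) (Fin N) ℂ),
      2 * (star ws ⬝ᵥ (Q * Qsᴴ).mulVec ws).re
        - (star ws ⬝ᵥ (ls • (R - Rs) + (2 : ℝ) • (Qs * Qsᴴ)).mulVec ws).re
      = 2 * (star ws ⬝ᵥ (Q * Qsᴴ).mulVec ws).re
        - ls * ((OptAux.qc R ws).re - 1) - 2 * ls := by
    intro Q R
    have hexp : (star ws ⬝ᵥ (ls • (R - Rs) + (2 : ℝ) • (Qs * Qsᴴ)).mulVec ws).re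
        = ls * ((OptAux.qc R ws).re - (OptAux.qc Rs ws).re)
          + 2 * (OptAux.qc (Qs * Qsᴴ) ws).re := by
      show (OptAux.qc (ls • (R - Rs) + (2 : ℝ) • (Qs * Qsᴴ)) ws).re = _
      rw [OptAux.qc_add_re, OptAux.qc_rsmul_re, OptAux.qc_rsmul_re, OptAux.qc_sub_re]
    rw [hexp, hqRs, hqQs]
    ring
  constructor
  · -- minimality implies VI
    intro hmin Q hQ R hR
    rw [hD Q R]
    set Δq := Q - Qs with hΔq
    set Δr := R - Rs with hΔr
    set Cross := Δq * Qsᴴ + Qs * Δqᴴ with hCross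
    set qA : (Fin N → ℂ) → ℝ := fun w => (OptAux.qc (Qs * Qsᴴ) w).re with hqA
    set qB : (Fin N → ℂ) → ℝ := fun w => (OptAux.qc Cross w).re with hqB
    set qC : (Fin N → ℂ) → ℝ := fun w => (OptAux.qc (Δq * Δqᴴ) w).re with hqC
    set qP : (Fin N → ℂ) → ℝ := fun w => (OptAux.qc Rs w).re with hqP
    set qQ' : (Fin N → ℂ) → ℝ := fun w => (OptAux.qc Δr w).re with hqQ'
    -- reduction of the goal
    have hQsQ : (OptAux.qc (Qs * Qᴴ) ws).re = (star ws ⬝ᵥ (Q * Qsᴴ).mulVec ws).re := by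
      rw [OptAux.qc, OptAux.dot_QQt,
        show star ws ⬝ᵥ (Q * Qsᴴ).mulVec ws = star (Qᴴ.mulVec ws) ⬝ᵥ (Qsᴴ.mulVec ws) from
          OptAux.dot_QQt Q Qs ws]
      exact OptAux.re_dot_comm _ _
    have hqBws : qB ws = 2 * (star ws ⬝ᵥ (Q * Qsᴴ).mulVec ws).re - 2 * ls := by
      simp only [hqB, hCross, hΔq]
      rw [OptAux.qc_add_re]
      rw [show (Q - Qs) * Qsᴴ = Q * Qsᴴ - Qs * Qsᴴ from Matrix.sub_mul _ _ _]
      rw [show Qs * (Q - Qs)ᴴ = Qs * Qᴴ - Qs * Qsᴴ from by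
        rw [conjTranspose_sub, Matrix.mul_sub]]
      rw [OptAux.qc_sub_re, OptAux.qc_sub_re, hqQs, hQsQ]
      have : (OptAux.qc (Q * Qsᴴ) ws).re = (star ws ⬝ᵥ (Q * Qsᴴ).mulVec ws).re := rfl
      rw [this]
      ring
    have hqQws : qQ' ws = (OptAux.qc R ws).re - 1 := by
      simp only [hqQ', hΔr]
      rw [OptAux.qc_sub_re, hqRs]
    suffices hfin : 0 ≤ qB ws - ls * qQ' ws by
      rw [hqBws, hqQws] at hfin
      linarith
    -- segment
    set Qt : ℝ → Matrix (Fin N) (Fin M) ℂ := fun t => Qs + t • Δq with hQt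
    set Rt : ℝ → Matrix (Fin N) (Fin N) ℂ := fun t => Rs + t • Δr with hRt
    have hmemQ : ∀ t : ℝ, 0 ≤ t → t ≤ 1 → Qt t ∈ B₀ := by
      intro t ht0 ht1
      have h := hB₀conv hQs hQ (by linarith : (0:ℝ) ≤ 1 - t) ht0 (by ring)
      have heq : (1 - t) • Qs + t • Q = Qt t := by
        simp only [hQt, hΔq]
        module
      rwa [heq] at h
    have hmemR : ∀ t : ℝ, 0 ≤ t → t ≤ 1 → Rt t ∈ B₁ := by
      intro t ht0 ht1
      have h := hB₁conv hRs hR (by linarith : (0:ℝ) ≤ 1 - t) ht0 (by ring)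
      have heq : (1 - t) • Rs + t • R = Rt t := by
        simp only [hRt, hΔr]
        module
      rwa [heq] at h
    have hnn : ∀ (t : ℝ) (w : Fin N → ℂ), (OptAux.qc (Qt t * (Qt t)ᴴ) w).re
        = qA w + t * qB w + t ^ 2 * qC w := by
      intro t w
      have hmat : Qt t * (Qt t)ᴴ = Qs * Qsᴴ + t • Cross + (t ^ 2) • (Δq * Δqᴴ) := by
        simp only [hQt, hCross]
        exact OptAux.QQt_expand Qs Δq t
      rw [hmat, OptAux.qc_add_re, OptAux.qc_add_re, OptAux.qc_rsmul_re, OptAux.qc_rsmul_re]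
    have hdd : ∀ (t : ℝ) (w : Fin N → ℂ), (OptAux.qc (Rt t) w).re = qP w + t * qQ' w := by
      intro t w
      have hmat : Rt t = Rs + t • Δr := by simp only [hRt]
      rw [hmat, OptAux.qc_add_re, OptAux.qc_rsmul_re]
    have hray0 : ∀ w : Fin N → ℂ, qA w ≤ ls * qP w := by
      intro w
      have h := OptAux.rayleigh_w_le hRsPD (Matrix.isHermitian_mul_conjTranspose_self Qs) w
      rw [← hls] at h
      exact h
    -- sequence of parameters
    set tn : ℕ → ℝ := fun n => ((n : ℝ) + 1)⁻¹ with htn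
    have htn0 : ∀ n, 0 < tn n := by
      intro n
      simp only [htn]
      positivity
    have htn1 : ∀ n, tn n ≤ 1 := by
      intro n
      simp only [htn]
      rw [inv_le_one_iff₀]
      right
      linarith [Nat.cast_nonneg (α := ℝ) n]
    have htnlim : Filter.Tendsto tn Filter.atTop (nhds 0) := by
      simpa [htn, one_div] using tendsto_one_div_add_atTop_nhds_zero_nat (𝕜 := ℝ)
    -- choice of near-maximizers
    have hchoice : ∀ n : ℕ, ∃ w : Fin N → ℂ, ‖w‖ = 1 ∧
        ls * (qP w + tn n * qQ' w) ≤ qA w + tn n * qB w + (tn n) ^ 2 * qC w := by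
      intro n
      have ht0 := htn0 n
      have ht1 := htn1 n
      have hQm := hmemQ (tn n) ht0.le ht1
      have hRm := hmemR (tn n) ht0.le ht1
      have hRtPD := hB₁pd _ hRm
      have hml := hmin _ hQm _ hRm
      obtain ⟨w, hw0, hw1, hw2⟩ := OptAux.rayleigh_w_max hRtPD
        (Matrix.isHermitian_mul_conjTranspose_self (Qt (tn n)))
      have hineq : ls * (OptAux.qc (Rt (tn n)) w).re
          ≤ (OptAux.qc (Qt (tn n) * (Qt (tn n))ᴴ) w).re := by
        rw [hw1, hw2, mul_one]
        exact hml
      have hwn : ‖w‖ ≠ 0 := norm_ne_zero_iff.mpr hw0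
      refine ⟨((‖w‖⁻¹ : ℝ) : ℂ) • w, ?_, ?_⟩
      · rw [norm_smul]
        simp only [Complex.norm_real, norm_inv, norm_norm, Real.norm_eq_abs, abs_norm]
        exact inv_mul_cancel₀ hwn
      · rw [← hnn, ← hdd, OptAux.qc_csmul_re, OptAux.qc_csmul_re]
        rw [mul_left_comm]
        exact mul_le_mul_of_nonneg_left hineq (Complex.normSq_nonneg _)
    choose wseq hwn1 hwn2 using hchoice
    have hsphere : ∀ n, wseq n ∈ Metric.sphere (0 : Fin N → ℂ) 1 := by
      intro n
      rw [mem_sphere_zero_iff_norm]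
      exact hwn1 n
    obtain ⟨w₀, hw₀mem, φ, hφ, hφlim⟩ :=
      (isCompact_sphere (0 : Fin N → ℂ) 1).tendsto_subseq hsphere
    have hw₀n : ‖w₀‖ = 1 := mem_sphere_zero_iff_norm.mp hw₀mem
    have hw₀ne : w₀ ≠ 0 := by
      intro h
      rw [h] at hw₀n
      simp at hw₀n
    have htφ : Filter.Tendsto (fun n => tn (φ n)) Filter.atTop (nhds 0) :=
      htnlim.comp hφ.tendsto_atTop
    have hcomp : ∀ M' : Matrix (Fin N) (Fin N) ℂ,
        Filter.Tendsto (fun n => (OptAux.qc M' (wseq (φ n))).re) Filter.atTop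
          (nhds ((OptAux.qc M' w₀).re)) := by
      intro M'
      exact ((OptAux.cont_qc_re M').tendsto w₀).comp hφlim
    have hcA : Filter.Tendsto (fun n => qA (wseq (φ n))) Filter.atTop (nhds (qA w₀)) := hcomp _
    have hcB : Filter.Tendsto (fun n => qB (wseq (φ n))) Filter.atTop (nhds (qB w₀)) := hcomp _
    have hcC : Filter.Tendsto (fun n => qC (wseq (φ n))) Filter.atTop (nhds (qC w₀)) := hcomp _
    have hcP : Filter.Tendsto (fun n => qP (wseq (φ n))) Filter.atTop (nhds (qP w₀)) := hcomp _
    have hcQ : Filter.Tendsto (fun n => qQ' (wseq (φ n))) Filter.atTop (nhds (qQ' w₀)) := hcomp _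
    -- first limit : equality of Rayleigh quotient at w₀
    have hlim1 : Filter.Tendsto (fun n =>
        (qA (wseq (φ n)) + tn (φ n) * qB (wseq (φ n)) + (tn (φ n)) ^ 2 * qC (wseq (φ n)))
          - ls * (qP (wseq (φ n)) + tn (φ n) * qQ' (wseq (φ n)))) Filter.atTop
        (nhds ((qA w₀ + 0 * qB w₀ + 0 ^ 2 * qC w₀) - ls * (qP w₀ + 0 * qQ' w₀))) := by
      exact ((hcA.add (htφ.mul hcB)).add ((htφ.pow 2).mul hcC)).sub
        (Filter.Tendsto.const_mul ls (hcP.add (htφ.mul hcQ)))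
    have h1 : 0 ≤ qA w₀ - ls * qP w₀ := by
      have := ge_of_tendsto' hlim1 (fun n => sub_nonneg.2 (hwn2 (φ n)))
      simpa using this
    have heqR : qA w₀ = ls * qP w₀ := le_antisymm (hray0 w₀) (by linarith)
    -- second limit : nonnegativity of the derivative expression at w₀
    have hG2 : ∀ n, 0 ≤ (qB (wseq (φ n)) * qP (wseq (φ n)) - qA (wseq (φ n)) * qQ' (wseq (φ n)))
        + tn (φ n) * (qC (wseq (φ n)) * qP (wseq (φ n))) := by
      intro n
      set w := wseq (φ n) with hwdef
      set t := tn (φ n) with htdef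
      have ht0 : 0 < t := htn0 (φ n)
      have hwne : w ≠ 0 := by
        intro h
        have := hwn1 (φ n)
        rw [← hwdef, h] at this
        simp at this
      have hddt : 0 < qP w + t * qQ' w := by
        have hRtPD := hB₁pd _ (hmemR t ht0.le (htn1 (φ n)))
        have hpos := hRtPD.re_dotProduct_pos hwne
        rw [← hdd t w]
        simpa [OptAux.qc] using hpos
      have hdd0 : 0 < qP w := by
        have hpos := hRsPD.re_dotProduct_pos hwne
        simpa [hqP, OptAux.qc] using hpos
      have hup := hray0 w
      have hlow := hwn2 (φ n)
      have hΦ : 0 ≤ t * ((qB w * qP w - qA w * qQ' w) + t * (qC w * qP w)) := by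
        have hfact : t * ((qB w * qP w - qA w * qQ' w) + t * (qC w * qP w))
            = (qA w + t * qB w + t ^ 2 * qC w) * qP w - qA w * (qP w + t * qQ' w) := by
          ring
        rw [hfact]
        nlinarith [mul_le_mul_of_nonneg_right hlow hdd0.le,
          mul_nonneg hddt.le (sub_nonneg.2 hup)]
      have h2' : t * 0 ≤ t * ((qB w * qP w - qA w * qQ' w) + t * (qC w * qP w)) := by
        simpa using hΦ
      exact (mul_le_mul_iff_of_pos_left ht0).mp h2'
    have hlim2 : Filter.Tendsto (fun n =>
        (qB (wseq (φ n)) * qP (wseq (φ n)) - qA (wseq (φ n)) * qQ' (wseq (φ n)))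
          + tn (φ n) * (qC (wseq (φ n)) * qP (wseq (φ n)))) Filter.atTop
        (nhds ((qB w₀ * qP w₀ - qA w₀ * qQ' w₀) + 0 * (qC w₀ * qP w₀))) :=
      ((hcB.mul hcP).sub (hcA.mul hcQ)).add (htφ.mul (hcC.mul hcP))
    have h2 : 0 ≤ qB w₀ * qP w₀ - qA w₀ * qQ' w₀ := by
      have := ge_of_tendsto' hlim2 hG2
      simpa using this
    -- identify w₀ as a multiple of ws
    have hAH : (isqrt Rs * (Qs * Qsᴴ) * isqrt Rs).IsHermitian :=
      OptAux.conj_herm (OptAux.isqrt_herm hRsPD) (Matrix.isHermitian_mul_conjTranspose_self Qs)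
    set u₀ := (psqrt hRsPD).mulVec w₀ with hu₀
    have hSu₀ : (isqrt Rs).mulVec u₀ = w₀ := OptAux.isqrt_sqrt_vec hRsPD w₀
    have hqAu : qA w₀ = (OptAux.qc (isqrt Rs * (Qs * Qsᴴ) * isqrt Rs) u₀).re := by
      rw [OptAux.qc_conj (OptAux.isqrt_herm hRsPD), hSu₀]
    have hqPu : qP w₀ = OptAux.sn u₀ := by
      have := OptAux.qc_R_isqrt_vec hRsPD u₀
      rw [hSu₀] at this
      simp only [hqP]
      rw [this, Complex.ofReal_re]
    have hls' : ls = OptAux.maxEig hAH := by rw [hls, OptAux.lambdaMax_eq hAH]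
    have heig := OptAux.eigen_of_eq hAH (v := u₀) (by rw [← hqAu, ← hqPu, heqR, hls'])
    obtain ⟨c, hc⟩ := hsimple u₀ (by
      rw [heig]
      congr 1
      rw [← hls'])
    have hw₀c : w₀ = c • ws := by
      rw [← hSu₀, hc, Matrix.mulVec_smul, hws]
    have hcne : c ≠ 0 := by
      intro h
      exact hw₀ne (by rw [hw₀c, h, zero_smul])
    have hk : 0 < Complex.normSq c := Complex.normSq_pos.2 hcne
    have hsA : qA w₀ = Complex.normSq c * qA ws := by
      rw [hw₀c]
      exact OptAux.qc_csmul_re _ c ws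
    have hsB : qB w₀ = Complex.normSq c * qB ws := by
      rw [hw₀c]
      exact OptAux.qc_csmul_re _ c ws
    have hsP : qP w₀ = Complex.normSq c * qP ws := by
      rw [hw₀c]
      exact OptAux.qc_csmul_re _ c ws
    have hsQ : qQ' w₀ = Complex.normSq c * qQ' ws := by
      rw [hw₀c]
      exact OptAux.qc_csmul_re _ c ws
    have hqPws : qP ws = 1 := hqRs
    have hqAws : qA ws = ls := hqQs
    rw [hsA, hsB, hsP, hsQ, hqPws, hqAws] at h2
    nlinarith [h2, mul_pos hk hk]
  · -- VI implies minimality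
    intro hVI Q hQ R hR
    have hRPD : R.PosDef := hB₁pd R hR
    have hvi := hVI Q hQ R hR
    rw [hD Q R] at hvi
    set a := Qᴴ.mulVec ws with ha
    set b := Qsᴴ.mulVec ws with hb
    have hXa : (star ws ⬝ᵥ (Q * Qsᴴ).mulVec ws).re = (star a ⬝ᵥ b).re := by
      rw [OptAux.dot_QQt]
    have hsnb : OptAux.sn b = ls := by
      have h1 : OptAux.qc (Qs * Qsᴴ) ws = ((OptAux.sn b : ℝ) : ℂ) := by
        rw [OptAux.qc, OptAux.dot_QQt, OptAux.dot_star_self]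
      have := hqQs
      rw [h1, Complex.ofReal_re] at this
      exact this
    have hsna : (OptAux.qc (Q * Qᴴ) ws).re = OptAux.sn a := by
      rw [OptAux.qc, OptAux.dot_QQt, OptAux.dot_star_self, Complex.ofReal_re]
    set dR := (OptAux.qc R ws).re with hdRdef
    have hdR : 0 < dR := by
      have := hRPD.re_dotProduct_pos hwsne
      simpa [OptAux.qc, RCLike.re_to_complex, hdRdef] using this
    have hyn : 0 ≤ OptAux.sn (a - ((dR : ℝ) : ℂ) • b) := OptAux.sn_nonneg _
    rw [OptAux.sn_sub_smul a b dR, hsnb] at hyn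
    rw [hXa] at hvi
    -- from hvi : 0 ≤ 2 * re⟨a,b⟩ - ls * (dR - 1) - 2 * ls, hyn, hdR derive ls * dR ≤ sn a
    have hkey : ls * dR ≤ OptAux.sn a := by nlinarith [hyn, hvi, hdR]
    have hray := OptAux.rayleigh_w_le hRPD (Matrix.isHermitian_mul_conjTranspose_self Q) ws
    rw [hsna] at hray
    have : ls * dR ≤ lambdaMax (isqrt R * (Q * Qᴴ) * isqrt R) * dR := le_trans hkey hray
    exact (mul_le_mul_iff_of_pos_right hdR).mp this
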